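/- Let G be a bipartite graph with parts A and B, no isolated vertices, and let b_1, b_2 be nonnegative integers. Construct an edge-colored hypergraph H with two colors c_a and c_b as follows: the vertex set of H is the edge set of G; for each a ∈ A there is a hyperedge e_a = {e ∈ E(G) : a is an endpoint of e} of color c_a, and for each b ∈ B there is a hyperedge e_b = {e ∈ E(G) : b is an endpoint of e} of color c_b. Then G has a vertex cover C with |C ∩ A| ≤ b_1 and |C ∩ B| ≤ b_2 if and only if there exists a vertex coloring of H leaving at most b_1 hyperedges of color c_a unsatisfied and at most b_2 hyperedges of color c_b unsatisfied. -/
import Mathlib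


open scoped Classical

theorem stmt12 {A B : Type*} [Fintype A] [Fintype B]
    (E : A → B → Prop) (b1 b2 : ℕ)
    (hA : ∀ a, ∃ b, E a b) (hB : ∀ b, ∃ a, E a b) :
    (∃ (CA : Finset A) (CB : Finset B),
      (∀ a b, E a b → a ∈ CA ∨ b ∈ CB) ∧ CA.card ≤ b1 ∧ CB.card ≤ b2) ↔
    (∃ lam : {p : A × B // E p.1 p.2} → Bool,
      (Finset.univ.filter (fun a : A =>
        ¬ (∀ p : {p : A × B // E p.1 p.2}, p.1.1 = a → lam p = true))).card ≤ b1 ∧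
      (Finset.univ.filter (fun b : B =>
        ¬ (∀ p : {p : A × B // E p.1 p.2}, p.1.2 = b → lam p = false))).card ≤ b2) := by
  constructor
  · rintro ⟨CA, CB, hcov, h1, h2⟩
    refine ⟨fun p => decide (p.1.1 ∉ CA), ?_, ?_⟩
    · refine le_trans (Finset.card_le_card ?_) h1
      intro a ha
      simp only [Finset.mem_filter, Finset.mem_univ, true_and] at ha
      by_contra hna
      exact ha (fun p hp => by simp [hp, hna])
    · refine le_trans (Finset.card_le_card ?_) h2
      intro b hb
      simp only [Finset.mem_filter, Finset.mem_univ, true_and] at hb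
      by_contra hnb
      refine hb (fun p hp => ?_)
      rcases hcov p.1.1 p.1.2 p.2 with h | h
      · simp [h]
      · exact absurd (hp ▸ h) hnb
  · rintro ⟨lam, h1, h2⟩
    refine ⟨Finset.univ.filter (fun a : A =>
        ¬ (∀ p : {p : A × B // E p.1 p.2}, p.1.1 = a → lam p = true)),
      Finset.univ.filter (fun b : B =>
        ¬ (∀ p : {p : A × B // E p.1 p.2}, p.1.2 = b → lam p = false)),
      ?_, h1, h2⟩
    intro a b hab
    by_contra hc
    push_neg at hc
    obtain ⟨ha, hb⟩ := hc
    rw [Finset.mem_filter] at ha hb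
    push_neg at ha hb
    have t := ha (Finset.mem_univ a) (⟨(a, b), hab⟩ : {p : A × B // E p.1 p.2}) rfl
    have f := hb (Finset.mem_univ b) (⟨(a, b), hab⟩ : {p : A × B // E p.1 p.2}) rfl
    simp [t] at f
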